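/- Let M be an n×n complex matrix (n ≥ 1), b a block assignment, M_D the pinching of M with respect to b, and M_off = M − M_D. Assume M_D is invertible and ρ = ρ(M_D⁻¹ M_off) < 1, and set c = −n·ln(1 − ρ). Then |det(M) − det(M_D)| / |det(M_D)| ≤ c ρ · e^{c ρ}. If in addition c ρ < 1, then |det(M) − det(M_D)| / |det(M_D)| ≤ (7/4) c ρ. -/

import Mathlib

open Matrix

/-- The pinching (block diagonal part) of a matrix `M` with respect to a
block assignment `b`. -/
def pinch {n k : ℕ} (b : Fin n → Fin k) (M : Matrix (Fin n) (Fin n) ℂ) :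
    Matrix (Fin n) (Fin n) ℂ :=
  fun i j => if b i = b j then M i j else 0

section AuxLemmas

open Polynomial


open Polynomial in
lemma my_eval_charpoly {n : ℕ} (B : Matrix (Fin n) (Fin n) ℂ) (x : ℂ) :
    B.charpoly.eval x = (Matrix.scalar (Fin n) x - B).det := by
  exact Matrix.eval_charpoly B x

-- log bound
lemma my_log_bound {z : ℂ} {ρ : ℝ} (h1 : ‖z‖ ≤ ρ) (h2 : ρ < 1) :
    ‖Complex.log (1 + z) - z‖ ≤ -Real.log (1 - ρ) - ρ := by
  have hρ0 : 0 ≤ ρ := le_trans (norm_nonneg z) h1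
  have hz1 : ‖z‖ < 1 := lt_of_le_of_lt h1 h2
  set f : ℕ → ℂ := fun m => (-1) ^ (m + 1) * z ^ m / m with hf
  have H : HasSum f (Complex.log (1 + z)) := Complex.hasSum_taylorSeries_log hz1
  have H2 : HasSum (fun m : ℕ => f (m + 2)) (Complex.log (1 + z) - z) := by
    have := (hasSum_nat_add_iff' (f := f) 2).mpr H
    simpa [hf, Finset.sum_range_succ] using this
  set g : ℕ → ℝ := fun m => ρ ^ (m + 2) / ((m : ℝ) + 2) with hg
  have HR : HasSum g (-Real.log (1 - ρ) - ρ) := by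
    have H0 := Real.hasSum_pow_div_log_of_abs_lt_one (x := ρ) (by rwa [abs_of_nonneg hρ0])
    have h' := (hasSum_nat_add_iff' (f := fun m : ℕ => ρ ^ (m + 1) / (m + 1)) 1).mpr H0
    have hfun : (fun m : ℕ => ρ ^ (m + 1 + 1) / ((m + 1 : ℕ) + 1 : ℝ)) = g := by
      funext m
      rw [hg]
      push_cast
      ring_nf
    rw [hfun] at h'
    simpa [Finset.sum_range_succ] using h'
  have hnorm : ∀ m : ℕ, ‖f (m + 2)‖ = ‖z‖ ^ (m + 2) / ((m : ℝ) + 2) := by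
    intro m
    have h2c : ((m : ℂ) + 2) = ((m + 2 : ℕ) : ℂ) := by push_cast; ring
    rw [hf]
    simp only [norm_div, norm_mul, norm_pow, norm_neg, norm_one, one_pow, one_mul, h2c,
      Complex.norm_natCast]
    push_cast
    ring
  have hbound : ∀ m : ℕ, ‖f (m + 2)‖ ≤ g m := by
    intro m
    rw [hnorm m, hg]
    have hm : (0:ℝ) < (m : ℝ) + 2 := by positivity
    exact (div_le_div_iff_of_pos_right hm).mpr (pow_le_pow_left₀ (norm_nonneg z) h1 _)
  have hsummable : Summable fun m : ℕ => ‖f (m + 2)‖ :=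
    Summable.of_nonneg_of_le (fun m => norm_nonneg _) hbound HR.summable
  calc ‖Complex.log (1 + z) - z‖ = ‖∑' m, f (m + 2)‖ := by
        rw [H2.tsum_eq]
    _ ≤ ∑' m, ‖f (m + 2)‖ := norm_tsum_le_tsum_norm hsummable
    _ ≤ ∑' m, g m := Summable.tsum_le_tsum hbound hsummable HR.summable
    _ = -Real.log (1 - ρ) - ρ := HR.tsum_eq

-- exp bound
lemma my_exp_bound (z : ℂ) : ‖Complex.exp z - 1‖ ≤ Real.exp (‖z‖) - 1 := by
  set f : ℕ → ℂ := fun m => z ^ m / m.factorial with hf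
  have H : HasSum f (Complex.exp z) := by
    rw [Complex.exp_eq_exp_ℂ]; exact NormedSpace.expSeries_div_hasSum_exp z
  have H2 : HasSum (fun m : ℕ => f (m + 1)) (Complex.exp z - 1) := by
    have := (hasSum_nat_add_iff' (f := f) 1).mpr H
    simpa [hf] using this
  set g : ℕ → ℝ := fun m => ‖z‖ ^ (m + 1) / (m + 1).factorial with hg
  have HR : HasSum g (Real.exp ‖z‖ - 1) := by
    have H0 : HasSum (fun m : ℕ => ‖z‖ ^ m / m.factorial) (Real.exp ‖z‖) := by
      rw [Real.exp_eq_exp_ℝ]; exact NormedSpace.expSeries_div_hasSum_exp _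
    have := (hasSum_nat_add_iff' (f := fun m : ℕ => ‖z‖ ^ m / m.factorial) 1).mpr H0
    simpa [hg] using this
  have hnorm : ∀ m : ℕ, ‖f (m + 1)‖ = g m := by
    intro m
    rw [hf, hg]
    simp [norm_div, norm_pow, Complex.norm_natCast]
  have hsummable : Summable fun m : ℕ => ‖f (m + 1)‖ := by
    rw [funext hnorm]; exact HR.summable
  calc ‖Complex.exp z - 1‖ = ‖∑' m, f (m + 1)‖ := by rw [H2.tsum_eq]
    _ ≤ ∑' m, ‖f (m + 1)‖ := norm_tsum_le_tsum_norm hsummable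
    _ = ∑' m, g m := by rw [funext hnorm]
    _ = Real.exp ‖z‖ - 1 := HR.tsum_eq

-- product as exp of sum of logs
lemma my_prod_exp (s : Multiset ℂ) (h : ∀ z ∈ s, 1 + z ≠ 0) :
    (s.map (fun z => 1 + z)).prod
      = Complex.exp ((s.map (fun z => Complex.log (1 + z))).sum) := by
  induction s using Multiset.induction with
  | empty => simp
  | cons a t ih =>
    simp only [Multiset.map_cons, Multiset.prod_cons, Multiset.sum_cons]
    rw [Complex.exp_add, ih (fun z hz => h z (Multiset.mem_cons_of_mem hz)),
      Complex.exp_log (h a (Multiset.mem_cons_self a t))]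


def blockSub {n k : ℕ} (b : Fin n → Fin k) : Subalgebra ℂ (Matrix (Fin n) (Fin n) ℂ) where
  carrier := {N | ∀ i j, b i ≠ b j → N i j = 0}
  zero_mem' := fun _ _ _ => rfl
  add_mem' := fun {x y} hx hy i j hij => by
    simp [Matrix.add_apply, hx i j hij, hy i j hij]
  mul_mem' := fun {x y} hx hy i j hij => by
    rw [Matrix.mul_apply]
    apply Finset.sum_eq_zero
    intro l _
    rcases eq_or_ne (b i) (b l) with h | h
    · rw [hy l j (h ▸ hij), mul_zero]
    · rw [hx i l h, zero_mul]
  one_mem' := fun i j hij => Matrix.one_apply_ne (fun h => hij (by rw [h]))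
  algebraMap_mem' := fun r i j hij => by
    have hij' : i ≠ j := fun h => hij (by rw [h])
    simp [Matrix.algebraMap_matrix_apply, hij']


/-- **Theorem (diagonal approximation, complex eigenvalues).**
If the pinching `M_D` is invertible and `ρ = ρ(M_D⁻¹ M_off) < 1`, then with
`c = -n ln(1-ρ)` we have `|det M - det M_D| / |det M_D| ≤ c ρ e^{c ρ}`;
and if moreover `c ρ < 1`, then `|det M - det M_D| / |det M_D| ≤ (7/4) c ρ`. -/
theorem stmt2 {n k : ℕ} (hn : 1 ≤ n)
    (M : Matrix (Fin n) (Fin n) ℂ) (b : Fin n → Fin k)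
    (MD Moff A : Matrix (Fin n) (Fin n) ℂ)
    (hMD : MD = pinch b M) (hMoff : Moff = M - MD) (hA : A = MD⁻¹ * Moff)
    (hMDinv : IsUnit MD.det)
    (ρ : ℝ)
    (hρub : ∀ μ ∈ A.charpoly.roots, ‖μ‖ ≤ ρ)
    (hρmax : ∃ μ ∈ A.charpoly.roots, ‖μ‖ = ρ)
    (hρ1 : ρ < 1)
    (c : ℝ) (hc : c = -(n : ℝ) * Real.log (1 - ρ)) :
    ‖M.det - MD.det‖ / ‖MD.det‖ ≤ c * ρ * Real.exp (c * ρ) ∧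
      (c * ρ < 1 →
        ‖M.det - MD.det‖ / ‖MD.det‖ ≤ 7 / 4 * (c * ρ)) := by
  -- basic positivity facts
  obtain ⟨μ₀, hμ₀mem, hμ₀⟩ := hρmax
  have hρ0 : 0 ≤ ρ := hμ₀ ▸ norm_nonneg μ₀
  have h1ρ : (0:ℝ) < 1 - ρ := by linarith
  set L : ℝ := -Real.log (1 - ρ) with hL
  have hL0 : 0 ≤ L := by
    rw [hL]
    simp only [neg_nonneg]
    exact Real.log_nonpos (by linarith) (by linarith)
  have hLρ : L - ρ ≤ L * ρ := by
    have hlog := Real.log_le_sub_one_of_pos (show (0:ℝ) < (1 - ρ)⁻¹ by positivity)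
    rw [Real.log_inv] at hlog
    have key : (1 - ρ) * L ≤ ρ := by
      have := mul_le_mul_of_nonneg_left hlog (le_of_lt h1ρ)
      rw [mul_sub, mul_inv_cancel₀ (ne_of_gt h1ρ)] at this
      rw [hL]
      nlinarith
    nlinarith
  -- MD⁻¹ has the block structure
  have hinvmem : ∀ i j, b i ≠ b j → MD⁻¹ i j = 0 := by
    set p := MD.charpoly with hp
    set Q := Polynomial.aeval MD p.divX with hQ
    set d := p.coeff 0 with hd
    have hdet : MD.det = (-1) ^ (Fintype.card (Fin n)) * d := Matrix.det_eq_sign_charpoly_coeff MD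
    have hdne : d ≠ 0 := by
      intro h0
      exact (hMDinv.ne_zero) (by rw [hdet, h0, mul_zero])
    have hCH : MD * Q + d • (1 : Matrix (Fin n) (Fin n) ℂ) = 0 := by
      have h1 : (Polynomial.aeval MD) (X * p.divX + C (p.coeff 0)) = 0 := by
        rw [X_mul_divX_add]; exact Matrix.aeval_self_charpoly MD
      rwa [map_add, _root_.map_mul, Polynomial.aeval_X, Polynomial.aeval_C,
        Algebra.algebraMap_eq_smul_one] at h1
    have hinv : MD * ((-d⁻¹) • Q) = 1 := by
      rw [Matrix.mul_smul]
      have hMQ : MD * Q = -(d • (1 : Matrix (Fin n) (Fin n) ℂ)) :=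
        eq_neg_of_add_eq_zero_left hCH
      rw [hMQ, smul_neg, neg_smul, neg_neg, smul_smul, inv_mul_cancel₀ hdne, one_smul]
    have hinv_eq : MD⁻¹ = (-d⁻¹) • Q := inv_eq_right_inv hinv
    have hMDmem : MD ∈ blockSub b := by
      intro i j hij
      rw [hMD]
      simp [pinch, hij]
    have hQmem : Q ∈ blockSub b := by
      have h1 : Algebra.adjoin ℂ {MD} ≤ blockSub b :=
        Algebra.adjoin_le (Set.singleton_subset_iff.mpr hMDmem)
      exact h1 (Polynomial.aeval_mem_adjoin_singleton ℂ MD)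
    intro i j hij
    rw [hinv_eq, Matrix.smul_apply, hQmem i j hij, smul_zero]
  -- trace A = 0
  have htrace : A.trace = 0 := by
    have hdiag : ∀ i, A i i = 0 := by
      intro i
      rw [hA, Matrix.mul_apply]
      apply Finset.sum_eq_zero
      intro l _
      rcases eq_or_ne (b i) (b l) with h | h
      · have : Moff l i = 0 := by
          rw [hMoff, Matrix.sub_apply, hMD]
          simp [pinch, h.symm]
        rw [this, mul_zero]
      · rw [hinvmem i l h, zero_mul]
    simp [Matrix.trace, Matrix.diag, hdiag]
  -- roots of charpoly
  set r := A.charpoly.roots with hr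
  have hcard : Multiset.card r = n := by
    rw [hr, (Polynomial.splits_iff_card_roots).mp (IsAlgClosed.splits A.charpoly),
      Matrix.charpoly_natDegree_eq_dim, Fintype.card_fin]
  have hsum : r.sum = 0 := by
    rw [hr, ← Matrix.trace_eq_sum_roots_charpoly, htrace]
  -- det (1+A) = prod of (1+μ)
  have hdet1A : (1 + A).det = (r.map (fun μ => 1 + μ)).prod := by
    have hfac := Polynomial.Splits.eq_prod_roots_of_monic
      (IsAlgClosed.splits A.charpoly) (Matrix.charpoly_monic A)
    have hev := congrArg (Polynomial.eval (-1 : ℂ)) hfac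
    rw [my_eval_charpoly, Polynomial.eval_multiset_prod, Multiset.map_map] at hev
    have hscal : Matrix.scalar (Fin n) (-1 : ℂ) - A = -(1 + A) := by
      have h1 : Matrix.scalar (Fin n) (-1 : ℂ) = -1 := by
        rw [map_neg, _root_.map_one]
      rw [h1]
      abel
    rw [hscal, Matrix.det_neg, Fintype.card_fin] at hev
    have hmap : r.map ((Polynomial.eval (-1 : ℂ)) ∘ fun a => X - C a)
        = (r.map (fun μ => (1:ℂ) + μ)).map Neg.neg := by
      rw [Multiset.map_map]
      apply Multiset.map_congr rfl
      intro x _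
      simp [Function.comp]
      ring
    rw [hmap, Multiset.prod_map_neg, Multiset.card_map, hcard] at hev
    exact mul_left_cancel₀ (pow_ne_zero n (by norm_num : (-1:ℂ) ≠ 0)) hev
  -- factorization of det M
  have hfact : M.det = MD.det * (1 + A).det := by
    have hM : MD * (1 + A) = M := by
      rw [hA, mul_add, mul_one, ← Matrix.mul_assoc, Matrix.mul_nonsing_inv MD hMDinv,
        Matrix.one_mul, hMoff]
      abel
    rw [← hM, Matrix.det_mul]
  have hdetne : ‖MD.det‖ ≠ 0 := by
    simpa using hMDinv.ne_zero
  have hlhs : ‖M.det - MD.det‖ / ‖MD.det‖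
      = ‖(1 + A).det - 1‖ := by
    have : M.det - MD.det = MD.det * ((1 + A).det - 1) := by rw [hfact]; ring
    rw [this, norm_mul]
    field_simp
  -- detail: abs(a*b) = abs a * abs b then (x*y)/x = y
  -- the sum of logs
  set s := (r.map (fun μ => Complex.log (1 + μ))).sum with hs
  have hne : ∀ μ ∈ r, (1:ℂ) + μ ≠ 0 := by
    intro μ hμ h0
    have hμ1 : μ = -1 := by linear_combination h0
    rw [hμ1] at hμ
    have := hρub _ hμ
    simp at this
    linarith
  have hexp : (1 + A).det = Complex.exp s := by rw [hdet1A, my_prod_exp r hne]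
  -- bound on |s|
  have hsle : ‖s‖ ≤ (n:ℝ) * (L - ρ) := by
    have hsplit : s = (r.map (fun μ => Complex.log (1 + μ) - μ)).sum := by
      have h1 := Multiset.sum_map_add (m := r)
        (f := fun μ => Complex.log (1 + μ) - μ) (g := fun μ => μ)
      simp only [sub_add_cancel] at h1
      rw [hs, h1, Multiset.map_id', hsum, add_zero]
    rw [hsplit]
    calc ‖(r.map (fun μ => Complex.log (1 + μ) - μ)).sum‖
        = ‖(r.map (fun μ => Complex.log (1 + μ) - μ)).sum‖ := rfl
      _ ≤ ((r.map (fun μ => Complex.log (1 + μ) - μ)).map (fun x => ‖x‖)).sum :=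
          norm_multiset_sum_le _
      _ ≤ (Multiset.card ((r.map (fun μ => Complex.log (1 + μ) - μ)).map (fun x : ℂ => ‖x‖))) • (L - ρ) := by
          apply Multiset.sum_le_card_nsmul
          intro x hx
          rw [Multiset.mem_map] at hx
          obtain ⟨y, hy, rfl⟩ := hx
          rw [Multiset.mem_map] at hy
          obtain ⟨μ, hμ, rfl⟩ := hy
          exact my_log_bound (hρub μ hμ) hρ1
      _ = (n:ℝ) * (L - ρ) := by
          rw [Multiset.card_map, Multiset.card_map, hcard, nsmul_eq_mul]
  have hcρ : c * ρ = (n:ℝ) * L * ρ := by rw [hc, hL]; ring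
  have hsle2 : ‖s‖ ≤ c * ρ := by
    rw [hcρ]
    calc ‖s‖ ≤ (n:ℝ) * (L - ρ) := hsle
      _ ≤ (n:ℝ) * (L * ρ) := by
          apply mul_le_mul_of_nonneg_left hLρ (Nat.cast_nonneg n)
      _ = (n:ℝ) * L * ρ := by ring
  have hcρ0 : 0 ≤ c * ρ := by
    rw [hcρ]; positivity
  -- main bound
  have hmain : ‖(1 + A).det - 1‖ ≤ Real.exp (c * ρ) - 1 := by
    rw [hexp]
    calc ‖Complex.exp s - 1‖ ≤ Real.exp (‖s‖) - 1 := my_exp_bound s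
      _ ≤ Real.exp (c * ρ) - 1 := by
          have := Real.exp_le_exp.mpr hsle2
          linarith
  rw [hlhs]
  constructor
  · -- e^t - 1 ≤ t e^t
    refine hmain.trans ?_
    set t := c * ρ
    have h1 := Real.add_one_le_exp (-t)
    have h2 : Real.exp (-t) * Real.exp t = 1 := by
      rw [← Real.exp_add]; simp
    nlinarith [Real.exp_pos t, mul_le_mul_of_nonneg_right h1 (Real.exp_pos t).le]
  · intro hlt
    refine hmain.trans ?_
    set t := c * ρ
    have hconv := convexOn_exp.2 (Set.mem_univ (0:ℝ)) (Set.mem_univ (1:ℝ))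
      (by linarith : (0:ℝ) ≤ 1 - t) (hcρ0) (by ring)
    simp only [smul_eq_mul, mul_zero, mul_one, zero_add, Real.exp_zero] at hconv
    have he : Real.exp 1 < 2.7182818286 := Real.exp_one_lt_d9
    nlinarith

end AuxLemmas
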